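/- Let p = (0,0,1,0,0), q = (0,q₂,q₃,q₄,q₅) ∈ ℂ⁵ with q₂ ≠ 0. Suppose v = (v₁,…,v₅) ∈ ℂ⁵ satisfies, for all (r,s) ∈ ℂ², the equations (r + s q₃)v₁ + s q₄ v₂ - s q₂ v₄ = 0 and s q₄ v₁ + s q₅ v₂ - s q₂ v₅ = 0. Then v ∈ span{p, q}. -/
import Mathlib

/-- If `v ∈ ℂ⁵` satisfies `(r + s q₃)v₁ + s q₄ v₂ - s q₂ v₄ = 0` and
`s q₄ v₁ + s q₅ v₂ - s q₂ v₅ = 0` for all `(r,s) ∈ ℂ²`, then `v` lies in the span of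
`p = (0,0,1,0,0)` and `q = (0,q₂,q₃,q₄,q₅)` (assuming `q₂ ≠ 0`). -/
theorem solutions_for_all_rs_in_span (q2 q3 q4 q5 : ℂ) (hq2 : q2 ≠ 0)
    (v : Fin 5 → ℂ)
    (hv : ∀ r s : ℂ,
      (r + s * q3) * v 0 + s * q4 * v 1 - s * q2 * v 3 = 0 ∧
      s * q4 * v 0 + s * q5 * v 1 - s * q2 * v 4 = 0) :
    v ∈ Submodule.span ℂ {(![0, 0, 1, 0, 0] : Fin 5 → ℂ), ![0, q2, q3, q4, q5]} := by
  have h10 := (hv 1 0).1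
  have h01 := hv 0 1
  have hv0 : v 0 = 0 := by have := h10; push_cast at this; linear_combination this
  have hv3 : v 3 = q4 * v 1 / q2 := by
    have := h01.1; rw [hv0] at this; field_simp; linear_combination -this
  have hv4 : v 4 = q5 * v 1 / q2 := by
    have := h01.2; rw [hv0] at this; field_simp; linear_combination -this
  rw [Submodule.mem_span_pair]
  refine ⟨v 2 - v 1 * q3 / q2, v 1 / q2, ?_⟩
  funext i
  fin_cases i <;> simp [hv0, hv3, hv4] <;> field_simp <;> ring
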